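/- Let W : X → Y be a DMC with |X| = q and |Y| = M. Then there exist two distinct output symbols y1, y2 ∈ Y such that P_Y(y1) ≤ 2/M, P_Y(y2) ≤ 2/M, and ||P_W(·|y1) − P_W(·|y2)||_1 = O((1/M)^{1/(q−1)}). Consequently, merging y1 and y2 yields a degraded channel W̃ with 0 ≤ I(W) − I(W̃) = O((1/M)^{q/(q−1)}). -/

import Mathlib

open Finset

noncomputable section

/-- Output marginal of a channel `W` (with `W x y = W(y|x)`) under uniform input. -/
def PY {X Y : Type*} [Fintype X] (W : X → Y → ℝ) (y : Y) : ℝ :=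
  (∑ x : X, W x y) / (Fintype.card X : ℝ)

/-- Posterior distribution of the (uniform) input given output `y`. -/
def post {X Y : Type*} [Fintype X] (W : X → Y → ℝ) (y : Y) (x : X) : ℝ :=
  W x y / ∑ x0 : X, W x0 y

/-- Symmetric capacity: mutual information between a uniform input and the output. -/
def symCap {X Y : Type*} [Fintype X] [Fintype Y] (W : X → Y → ℝ) : ℝ :=
  ∑ y : Y, ∑ x : X, (W x y / (Fintype.card X : ℝ)) *
    Real.logb 2 (W x y * (Fintype.card X : ℝ) / ∑ x0 : X, W x0 y)

/-- The channel obtained from `W` by merging outputs `y1` and `y2`, encoded on the same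
output alphabet: the merged symbol is represented by `y1` and `y2` gets zero mass. -/
def mergeCh {X Y : Type*} [DecidableEq Y] (W : X → Y → ℝ) (y1 y2 : Y)
    (x : X) (y : Y) : ℝ :=
  if y = y1 then W x y1 + W x y2 else if y = y2 then 0 else W x y

section PostFacts

variable {X Y : Type*} [Fintype X]

lemma post_nonneg (W : X → Y → ℝ) (hW : ∀ x y, 0 ≤ W x y) (y : Y) (x : X) :
    0 ≤ post W y x :=
  div_nonneg (hW x y) (Finset.sum_nonneg fun x0 _ => hW x0 y)

lemma post_le_one (W : X → Y → ℝ) (hW : ∀ x y, 0 ≤ W x y) (y : Y) (x : X) :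
    post W y x ≤ 1 := by
  unfold post
  rcases eq_or_lt_of_le (Finset.sum_nonneg fun x0 (_ : x0 ∈ Finset.univ) => hW x0 y) with h | h
  · rw [← h, div_zero]; norm_num
  · exact div_le_one_of_le₀ (Finset.single_le_sum (fun x0 _ => hW x0 y) (Finset.mem_univ x)) h.le

lemma post_sum_eq_one (W : X → Y → ℝ) (y : Y) (h : (∑ x0 : X, W x0 y) ≠ 0) :
    ∑ x : X, post W y x = 1 := by
  unfold post
  rw [← Finset.sum_div, div_self h]

lemma post_sum_le_one (W : X → Y → ℝ) (hW : ∀ x y, 0 ≤ W x y) (y : Y) :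
    ∑ x : X, post W y x ≤ 1 := by
  by_cases h : (∑ x0 : X, W x0 y) = 0
  · rw [Finset.sum_eq_zero (fun x _ => by unfold post; rw [h, div_zero])]; norm_num
  · rw [post_sum_eq_one W y h]

lemma post_eq_zero_of_deg (W : X → Y → ℝ) (y : Y) (h : (∑ x0 : X, W x0 y) = 0) (x : X) :
    post W y x = 0 := by
  unfold post; rw [h, div_zero]

end PostFacts


/-- Two-term log-sum inequality (lower bound for the merge defect). -/
lemma key_lb (a b s1 s2 : ℝ) (ha : 0 ≤ a) (hb : 0 ≤ b) (has : a ≤ s1) (hbs : b ≤ s2) :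
    (a + b) * Real.log ((a + b) / (s1 + s2)) ≤
      a * Real.log (a / s1) + b * Real.log (b / s2) := by
  have hs1 : 0 ≤ s1 := le_trans ha has
  have hs2 : 0 ≤ s2 := le_trans hb hbs
  rcases eq_or_lt_of_le ha with rfl | ha'
  · rcases eq_or_lt_of_le hb with rfl | hb'
    · simp
    · have hs2' : 0 < s2 := lt_of_lt_of_le hb' hbs
      simp only [zero_add, zero_mul]
      have h1 : b / (s1 + s2) ≤ b / s2 := by gcongr; linarith
      have h2 : Real.log (b / (s1 + s2)) ≤ Real.log (b / s2) :=
        Real.log_le_log (by positivity) h1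
      nlinarith
  rcases eq_or_lt_of_le hb with rfl | hb'
  · have hs1' : 0 < s1 := lt_of_lt_of_le ha' has
    simp only [add_zero, zero_mul]
    have h1 : a / (s1 + s2) ≤ a / s1 := by gcongr; linarith
    have h2 : Real.log (a / (s1 + s2)) ≤ Real.log (a / s1) :=
      Real.log_le_log (by positivity) h1
    nlinarith
  · have hs1' : 0 < s1 := lt_of_lt_of_le ha' has
    have hs2' : 0 < s2 := lt_of_lt_of_le hb' hbs
    have hS : 0 < s1 + s2 := by linarith
    have hA : 0 < a + b := by linarith
    have h1 : Real.log ((a + b) * s1 / ((s1 + s2) * a)) ≤ (a + b) * s1 / ((s1 + s2) * a) - 1 :=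
      Real.log_le_sub_one_of_pos (by positivity)
    have h2 : Real.log ((a + b) * s2 / ((s1 + s2) * b)) ≤ (a + b) * s2 / ((s1 + s2) * b) - 1 :=
      Real.log_le_sub_one_of_pos (by positivity)
    have e1 : Real.log ((a + b) * s1 / ((s1 + s2) * a)) =
        Real.log ((a + b) / (s1 + s2)) - Real.log (a / s1) := by
      rw [Real.log_div (by positivity) (by positivity), Real.log_mul (by positivity) (by positivity),
        Real.log_mul (by positivity) (by positivity), Real.log_div hA.ne' hS.ne',
        Real.log_div ha'.ne' hs1'.ne']
      ring
    have e2 : Real.log ((a + b) * s2 / ((s1 + s2) * b)) =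
        Real.log ((a + b) / (s1 + s2)) - Real.log (b / s2) := by
      rw [Real.log_div (by positivity) (by positivity), Real.log_mul (by positivity) (by positivity),
        Real.log_mul (by positivity) (by positivity), Real.log_div hA.ne' hS.ne',
        Real.log_div hb'.ne' hs2'.ne']
      ring
    have h1' := mul_le_mul_of_nonneg_left h1 ha
    have h2' := mul_le_mul_of_nonneg_left h2 hb
    rw [e1] at h1'
    rw [e2] at h2'
    have hz : a * ((a + b) * s1 / ((s1 + s2) * a) - 1) + b * ((a + b) * s2 / ((s1 + s2) * b) - 1) = 0 := by
      field_simp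
      ring
    nlinarith [h1', h2']

lemma arith2 (s1 s2 p r : ℝ) (hs1 : 0 < s1) (hs2 : 0 < s2) (hp : 0 < p) (hr : 0 < r) :
    s1 * p * (p * (s1 + s2) / (s1 * p + s2 * r) - 1)
      + s2 * r * (r * (s1 + s2) / (s1 * p + s2 * r) - 1) ≤ (s1 + s2) * |p - r| := by
  have hA : 0 < s1 * p + s2 * r := by positivity
  have hd : |p - r| ≤ p + r := by
    rw [abs_sub_le_iff]; constructor <;> nlinarith
  have hd2 : (p - r) ^ 2 ≤ |p - r| * (p + r) := by
    nlinarith [sq_abs (p - r), abs_nonneg (p - r)]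
  have hLHS : s1 * p * (p * (s1 + s2) / (s1 * p + s2 * r) - 1)
      + s2 * r * (r * (s1 + s2) / (s1 * p + s2 * r) - 1)
      = s1 * s2 * (p - r) ^ 2 / (s1 * p + s2 * r) := by
    field_simp
    ring
  rw [hLHS, div_le_iff₀ hA]
  have h1 : s1 * s2 * (p - r) ^ 2 ≤ s1 * s2 * (|p - r| * (p + r)) :=
    mul_le_mul_of_nonneg_left hd2 (by positivity)
  have h2 : s1 * s2 * (p + r) ≤ (s1 + s2) * (s1 * p + s2 * r) := by
    nlinarith [mul_nonneg (mul_nonneg hs1.le hs1.le) hp.le,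
      mul_nonneg (mul_nonneg hs2.le hs2.le) hr.le]
  nlinarith [mul_le_mul_of_nonneg_left h2 (abs_nonneg (p - r))]

/-- Upper bound for the merge defect: at most (s1+s2) times the posterior gap. -/
lemma key_ub (a b s1 s2 : ℝ) (ha : 0 ≤ a) (hb : 0 ≤ b) (has : a ≤ s1) (hbs : b ≤ s2) :
    a * Real.log (a / s1) + b * Real.log (b / s2)
      - (a + b) * Real.log ((a + b) / (s1 + s2)) ≤
      (s1 + s2) * |a / s1 - b / s2| := by
  have hs1 : 0 ≤ s1 := le_trans ha has
  have hs2 : 0 ≤ s2 := le_trans hb hbs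
  rcases eq_or_lt_of_le ha with rfl | ha'
  · rcases eq_or_lt_of_le hb with rfl | hb'
    · simp
    · have hs2' : 0 < s2 := lt_of_lt_of_le hb' hbs
      have hS : 0 < s1 + s2 := by linarith
      simp only [zero_add, zero_mul, zero_div, zero_sub, abs_neg]
      rw [abs_of_nonneg (by positivity : (0:ℝ) ≤ b / s2)]
      have h1 : Real.log ((s1 + s2) / s2) ≤ (s1 + s2) / s2 - 1 :=
        Real.log_le_sub_one_of_pos (by positivity)
      have e1 : Real.log (b / s2) - Real.log (b / (s1 + s2)) = Real.log ((s1 + s2) / s2) := by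
        rw [Real.log_div hb'.ne' hs2'.ne', Real.log_div hb'.ne' hS.ne',
          Real.log_div hS.ne' hs2'.ne']
        ring
      have h2 : b * (Real.log (b / s2) - Real.log (b / (s1 + s2))) ≤ b * ((s1 + s2) / s2 - 1) := by
        rw [e1]; exact mul_le_mul_of_nonneg_left h1 hb
      have e2 : b * ((s1 + s2) / s2 - 1) = (s1 + s2) * (b / s2) - b := by ring
      nlinarith
  · rcases eq_or_lt_of_le hb with rfl | hb'
    · have hs1' : 0 < s1 := lt_of_lt_of_le ha' has
      have hS : 0 < s1 + s2 := by linarith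
      simp only [add_zero, zero_mul, zero_div, sub_zero]
      rw [abs_of_nonneg (by positivity : (0:ℝ) ≤ a / s1)]
      have h1 : Real.log ((s1 + s2) / s1) ≤ (s1 + s2) / s1 - 1 :=
        Real.log_le_sub_one_of_pos (by positivity)
      have e1 : Real.log (a / s1) - Real.log (a / (s1 + s2)) = Real.log ((s1 + s2) / s1) := by
        rw [Real.log_div ha'.ne' hs1'.ne', Real.log_div ha'.ne' hS.ne',
          Real.log_div hS.ne' hs1'.ne']
        ring
      have h2 : a * (Real.log (a / s1) - Real.log (a / (s1 + s2))) ≤ a * ((s1 + s2) / s1 - 1) := by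
        rw [e1]; exact mul_le_mul_of_nonneg_left h1 ha
      have e2 : a * ((s1 + s2) / s1 - 1) = (s1 + s2) * (a / s1) - a := by ring
      nlinarith
    · -- both positive
      have hs1' : 0 < s1 := lt_of_lt_of_le ha' has
      have hs2' : 0 < s2 := lt_of_lt_of_le hb' hbs
      have hS : 0 < s1 + s2 := by linarith
      have hA : 0 < a + b := by linarith
      have hp' : 0 < a / s1 := by positivity
      have hr' : 0 < b / s2 := by positivity
      have hm' : 0 < (a + b) / (s1 + s2) := by positivity
      have h1 : Real.log ((a / s1) / ((a + b) / (s1 + s2)))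
          ≤ (a / s1) / ((a + b) / (s1 + s2)) - 1 := Real.log_le_sub_one_of_pos (by positivity)
      have h2 : Real.log ((b / s2) / ((a + b) / (s1 + s2)))
          ≤ (b / s2) / ((a + b) / (s1 + s2)) - 1 := Real.log_le_sub_one_of_pos (by positivity)
      have e1 : Real.log ((a / s1) / ((a + b) / (s1 + s2)))
          = Real.log (a / s1) - Real.log ((a + b) / (s1 + s2)) :=
        Real.log_div hp'.ne' hm'.ne'
      have e2 : Real.log ((b / s2) / ((a + b) / (s1 + s2)))
          = Real.log (b / s2) - Real.log ((a + b) / (s1 + s2)) :=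
        Real.log_div hr'.ne' hm'.ne'
      rw [e1] at h1
      rw [e2] at h2
      have g1 := mul_le_mul_of_nonneg_left h1 ha
      have g2 := mul_le_mul_of_nonneg_left h2 hb
      have harith := arith2 s1 s2 (a / s1) (b / s2) hs1' hs2' hp' hr'
      have ea : s1 * (a / s1) = a := by field_simp
      have eb : s2 * (b / s2) = b := by field_simp
      rw [ea, eb] at harith
      have em : (a / s1) * ((a + b) / (s1 + s2))⁻¹ = (a / s1) * (s1 + s2) / (a + b) := by
        field_simp
      have em2 : (b / s2) * ((a + b) / (s1 + s2))⁻¹ = (b / s2) * (s1 + s2) / (a + b) := by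
        field_simp
      have hdiv1 : (a / s1) / ((a + b) / (s1 + s2)) = (a / s1) * (s1 + s2) / (a + b) := by
        rw [div_eq_mul_inv, em]
      have hdiv2 : (b / s2) / ((a + b) / (s1 + s2)) = (b / s2) * (s1 + s2) / (a + b) := by
        rw [div_eq_mul_inv, em2]
      rw [hdiv1] at g1
      rw [hdiv2] at g2
      calc a * Real.log (a / s1) + b * Real.log (b / s2)
          - (a + b) * Real.log ((a + b) / (s1 + s2))
          = a * (Real.log (a / s1) - Real.log ((a + b) / (s1 + s2)))
            + b * (Real.log (b / s2) - Real.log ((a + b) / (s1 + s2))) := by ring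
        _ ≤ a * ((a / s1) * (s1 + s2) / (a + b) - 1)
            + b * ((b / s2) * (s1 + s2) / (a + b) - 1) := by linarith
        _ ≤ (s1 + s2) * |a / s1 - b / s2| := harith
lemma logb_expand (a s qc : ℝ) (ha : 0 ≤ a) (has : a ≤ s) (hqc : 0 < qc) :
    (a / qc) * Real.logb 2 (a * qc / s) =
      (a * Real.log (a / s) + a * Real.log qc) / (qc * Real.log 2) := by
  rcases eq_or_lt_of_le ha with rfl | ha'
  · simp
  · have hs : 0 < s := lt_of_lt_of_le ha' has
    have hlog2 : Real.log 2 ≠ 0 := (Real.log_pos (by norm_num)).ne'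
    have e : a * qc / s = (a / s) * qc := by ring
    rw [Real.logb, e, Real.log_mul (by positivity) hqc.ne']
    field_simp

lemma symCap_sub_merge {X Y : Type*} [Fintype X] [Fintype Y] [DecidableEq Y] (W : X → Y → ℝ) (hW : ∀ x y, 0 ≤ W x y)
    (y1 y2 : Y) (hne : y1 ≠ y2) (hX : 0 < Fintype.card X) :
    symCap W - symCap (mergeCh W y1 y2) =
      (∑ x : X, (W x y1 * Real.log (W x y1 / ∑ x0 : X, W x0 y1)
         + W x y2 * Real.log (W x y2 / ∑ x0 : X, W x0 y2)
         - (W x y1 + W x y2) *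
             Real.log ((W x y1 + W x y2) / ((∑ x0 : X, W x0 y1) + (∑ x0 : X, W x0 y2)))))
        / ((Fintype.card X : ℝ) * Real.log 2) := by
  classical
  set qc : ℝ := (Fintype.card X : ℝ) with hqcdef
  have hqc : 0 < qc := by rw [hqcdef]; exact_mod_cast hX
  set W' := mergeCh W y1 y2 with hW'
  -- pointwise description of W'
  have hW'y1 : ∀ x, W' x y1 = W x y1 + W x y2 := by
    intro x; simp [hW', mergeCh]
  have hW'y2 : ∀ x, W' x y2 = 0 := by
    intro x; simp [hW', mergeCh, hne.symm]
  have hW'other : ∀ x y, y ≠ y1 → y ≠ y2 → W' x y = W x y := by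
    intro x y h1 h2; simp [hW', mergeCh, h1, h2]
  set F : (X → Y → ℝ) → Y → ℝ := fun V y => ∑ x : X, (V x y / qc) *
      Real.logb 2 (V x y * qc / ∑ x0 : X, V x0 y) with hF
  have hsym : ∀ V : X → Y → ℝ, symCap V = ∑ y : Y, F V y := by
    intro V; rfl
  have hdiff : symCap W - symCap W' = ∑ y : Y, (F W y - F W' y) := by
    rw [hsym, hsym, ← Finset.sum_sub_distrib]
  have hvanish : ∀ y ∈ Finset.univ, y ∉ ({y1, y2} : Finset Y) → F W y - F W' y = 0 := by
    intro y _ hy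
    simp only [Finset.mem_insert, Finset.mem_singleton, not_or] at hy
    have h1 : ∀ x, W' x y = W x y := fun x => hW'other x y hy.1 hy.2
    have h2 : (∑ x0 : X, W' x0 y) = ∑ x0 : X, W x0 y := Finset.sum_congr rfl fun x _ => h1 x
    simp only [hF, h1, h2, sub_self]
  have hpair : symCap W - symCap W' = (F W y1 - F W' y1) + (F W y2 - F W' y2) := by
    rw [hdiff, ← Finset.sum_subset (Finset.subset_univ ({y1, y2} : Finset Y)) hvanish,
      Finset.sum_pair hne]
  have hFW'y2 : F W' y2 = 0 := by
    simp only [hF]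
    apply Finset.sum_eq_zero
    intro x _
    rw [hW'y2 x]
    simp
  -- sums
  have hsum1 : ∀ x, W x y1 ≤ ∑ x0 : X, W x0 y1 := fun x =>
    Finset.single_le_sum (fun x0 _ => hW x0 y1) (Finset.mem_univ x)
  have hsum2 : ∀ x, W x y2 ≤ ∑ x0 : X, W x0 y2 := fun x =>
    Finset.single_le_sum (fun x0 _ => hW x0 y2) (Finset.mem_univ x)
  have hS' : (∑ x0 : X, W' x0 y1) = (∑ x0 : X, W x0 y1) + (∑ x0 : X, W x0 y2) := by
    rw [← Finset.sum_add_distrib]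
    exact Finset.sum_congr rfl fun x _ => hW'y1 x
  -- expand each F via logb_expand
  have hFWy1 : F W y1 = ∑ x : X, (W x y1 * Real.log (W x y1 / ∑ x0 : X, W x0 y1)
      + W x y1 * Real.log qc) / (qc * Real.log 2) := by
    simp only [hF]
    exact Finset.sum_congr rfl fun x _ => logb_expand _ _ _ (hW x y1) (hsum1 x) hqc
  have hFWy2 : F W y2 = ∑ x : X, (W x y2 * Real.log (W x y2 / ∑ x0 : X, W x0 y2)
      + W x y2 * Real.log qc) / (qc * Real.log 2) := by
    simp only [hF]
    exact Finset.sum_congr rfl fun x _ => logb_expand _ _ _ (hW x y2) (hsum2 x) hqc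
  have hFW'y1 : F W' y1 = ∑ x : X, ((W x y1 + W x y2) *
      Real.log ((W x y1 + W x y2) / ((∑ x0 : X, W x0 y1) + (∑ x0 : X, W x0 y2)))
      + (W x y1 + W x y2) * Real.log qc) / (qc * Real.log 2) := by
    simp only [hF]
    refine Finset.sum_congr rfl fun x _ => ?_
    rw [hW'y1 x, hS']
    exact logb_expand _ _ _ (add_nonneg (hW x y1) (hW x y2)) (add_le_add (hsum1 x) (hsum2 x)) hqc
  rw [hpair, hFWy1, hFWy2, hFW'y1, hFW'y2]
  rw [← Finset.sum_div, ← Finset.sum_div, ← Finset.sum_div, sub_zero,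
    div_sub_div_same, ← add_div]
  congr 1
  rw [← Finset.sum_sub_distrib, ← Finset.sum_add_distrib]
  refine Finset.sum_congr rfl fun x _ => ?_
  ring

lemma bucket_bounds (K : ℕ) (hK : 0 < K) {t : ℝ} (ht0 : 0 ≤ t) (ht1 : t ≤ 1) :
    ((min ⌊t * K⌋₊ (K - 1) : ℕ) : ℝ) ≤ t * K ∧ t * K ≤ (min ⌊t * K⌋₊ (K - 1) : ℕ) + 1 := by
  have htK : 0 ≤ t * K := by positivity
  constructor
  · calc ((min ⌊t * K⌋₊ (K - 1) : ℕ) : ℝ) ≤ (⌊t * K⌋₊ : ℝ) := by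
          exact_mod_cast Nat.cast_le.mpr (min_le_left _ _)
      _ ≤ t * K := Nat.floor_le htK
  · rcases le_or_gt ⌊t * K⌋₊ (K - 1) with h | h
    · rw [min_eq_left h]
      exact (Nat.lt_floor_add_one (t * K)).le
    · rw [min_eq_right h.le]
      have : ((K - 1 : ℕ) : ℝ) + 1 = (K : ℝ) := by
        have : 1 ≤ K := hK
        push_cast [Nat.cast_sub this]
        ring
      rw [this]
      calc t * K ≤ 1 * K := by
            apply mul_le_mul_of_nonneg_right ht1 (by positivity)
        _ = (K : ℝ) := by ring

lemma bucket_close (K : ℕ) (hK : 0 < K) {t t' : ℝ} (ht0 : 0 ≤ t) (ht1 : t ≤ 1)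
    (ht0' : 0 ≤ t') (ht1' : t' ≤ 1)
    (h : min ⌊t * K⌋₊ (K - 1) = min ⌊t' * K⌋₊ (K - 1)) : |t - t'| ≤ 1 / K := by
  obtain ⟨h1, h2⟩ := bucket_bounds K hK ht0 ht1
  obtain ⟨h1', h2'⟩ := bucket_bounds K hK ht0' ht1'
  rw [h] at h1 h2
  have hKr : (0 : ℝ) < K := by exact_mod_cast hK
  rw [abs_sub_le_iff]
  constructor
  · rw [le_div_iff₀ hKr]
    nlinarith
  · rw [le_div_iff₀ hKr]
    nlinarith

lemma light_card {Y : Type*} [Fintype Y] (P : Y → ℝ) (hP : ∀ y, 0 ≤ P y)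
    (hsum : ∑ y, P y = 1) (hM : 2 ≤ Fintype.card Y) :
    (Fintype.card Y : ℝ) / 2 ≤
      ((Finset.univ.filter (fun y => P y ≤ 2 / (Fintype.card Y : ℝ))).card : ℝ) ∧
    2 ≤ (Finset.univ.filter (fun y => P y ≤ 2 / (Fintype.card Y : ℝ))).card := by
  classical
  set M := Fintype.card Y with hM'
  have hMr : (2 : ℝ) ≤ M := by exact_mod_cast hM
  have hMpos : (0 : ℝ) < M := by linarith
  set S := Finset.univ.filter (fun y => P y ≤ 2 / (M : ℝ)) with hS
  set Sc := Finset.univ.filter (fun y => ¬ P y ≤ 2 / (M : ℝ)) with hSc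
  have hcards : S.card + Sc.card = M := by
    rw [hS, hSc, Finset.card_filter_add_card_filter_not, Finset.card_univ]
  have hsub : ∑ y ∈ Sc, P y ≤ 1 := by
    rw [← hsum]
    exact Finset.sum_le_sum_of_subset_of_nonneg (Finset.subset_univ _)
      (fun y _ _ => hP y)
  have hlower : (Sc.card : ℝ) * (2 / M) ≤ ∑ y ∈ Sc, P y := by
    have := Finset.card_nsmul_le_sum Sc P (2 / (M : ℝ))
      (fun y hy => (le_of_lt (lt_of_not_ge (Finset.mem_filter.mp hy).2)))
    simpa [nsmul_eq_mul] using this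
  have hSc_le : (Sc.card : ℝ) ≤ M / 2 := by
    have hle1 : (Sc.card : ℝ) * (2 / M) ≤ 1 := le_trans hlower hsub
    have e : (Sc.card : ℝ) * (2 / M) * M = 2 * Sc.card := by field_simp
    nlinarith [mul_le_mul_of_nonneg_right hle1 hMpos.le]
  have hScard : (M : ℝ) / 2 ≤ (S.card : ℝ) := by
    have : (S.card : ℝ) + (Sc.card : ℝ) = M := by exact_mod_cast hcards
    linarith
  refine ⟨hScard, ?_⟩
  rcases eq_or_lt_of_le hM with hM2 | hM3
  · -- M = 2 : every symbol is light since P y ≤ 1 = 2/M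
    have hall : ∀ y, P y ≤ 2 / (M : ℝ) := by
      intro y
      have h1 : P y ≤ 1 := by
        rw [← hsum]
        exact Finset.single_le_sum (fun y _ => hP y) (Finset.mem_univ y)
      have : (M : ℝ) = 2 := by exact_mod_cast hM2.symm
      rw [this]
      norm_num
      exact h1
    have : S = Finset.univ := by
      rw [hS]
      exact Finset.filter_true_of_mem fun y _ => hall y
    rw [this, Finset.card_univ, ← hM']
    exact hM
  · -- M ≥ 3 : S.card ≥ M/2 > 1
    have h3 : (3 : ℝ) ≤ M := by exact_mod_cast hM3
    have : (1 : ℝ) < S.card := by linarith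
    exact_mod_cast Nat.lt_iff_add_one_le.mp (by exact_mod_cast this)
/-- Capacity-loss bounds for merging two light output symbols. -/
lemma cap_bounds {X Y : Type*} [Fintype X] [Fintype Y] [DecidableEq Y]
    (W : X → Y → ℝ) (hW : ∀ x y, 0 ≤ W x y) (y1 y2 : Y) (hne : y1 ≠ y2)
    (hX : 0 < Fintype.card X) (hM : 0 < Fintype.card Y)
    (h1 : PY W y1 ≤ 2 / (Fintype.card Y : ℝ)) (h2 : PY W y2 ≤ 2 / (Fintype.card Y : ℝ)) :
    0 ≤ symCap W - symCap (mergeCh W y1 y2) ∧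
    symCap W - symCap (mergeCh W y1 y2) ≤
      (8 / (Fintype.card Y : ℝ)) * ∑ x : X, |post W y1 x - post W y2 x| := by
  classical
  set qc : ℝ := (Fintype.card X : ℝ) with hqcdef
  have hqc : 0 < qc := by rw [hqcdef]; exact_mod_cast hX
  set Mr : ℝ := (Fintype.card Y : ℝ) with hMrdef
  have hMr : 0 < Mr := by rw [hMrdef]; exact_mod_cast hM
  set s1 : ℝ := ∑ x0 : X, W x0 y1 with hs1def
  set s2 : ℝ := ∑ x0 : X, W x0 y2 with hs2def
  have hsum1 : ∀ x, W x y1 ≤ s1 := fun x =>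
    Finset.single_le_sum (fun x0 _ => hW x0 y1) (Finset.mem_univ x)
  have hsum2 : ∀ x, W x y2 ≤ s2 := fun x =>
    Finset.single_le_sum (fun x0 _ => hW x0 y2) (Finset.mem_univ x)
  have hlog2 : (1/2 : ℝ) ≤ Real.log 2 := by
    have := Real.log_two_gt_d9; linarith
  have hlog2' : 0 < Real.log 2 := by linarith
  have hEq := symCap_sub_merge W hW y1 y2 hne hX
  set T : ℝ := ∑ x : X, (W x y1 * Real.log (W x y1 / s1)
         + W x y2 * Real.log (W x y2 / s2)
         - (W x y1 + W x y2) * Real.log ((W x y1 + W x y2) / (s1 + s2))) with hT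
  have hEq' : symCap W - symCap (mergeCh W y1 y2) = T / (qc * Real.log 2) := hEq
  have hTnn : 0 ≤ T := by
    apply Finset.sum_nonneg
    intro x _
    have := key_lb (W x y1) (W x y2) s1 s2 (hW x y1) (hW x y2) (hsum1 x) (hsum2 x)
    linarith
  have hTub : T ≤ (s1 + s2) * ∑ x : X, |post W y1 x - post W y2 x| := by
    rw [Finset.mul_sum]
    apply Finset.sum_le_sum
    intro x _
    have := key_ub (W x y1) (W x y2) s1 s2 (hW x y1) (hW x y2) (hsum1 x) (hsum2 x)
    unfold post
    rw [← hs1def, ← hs2def]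
    linarith
  have hDnn : 0 ≤ ∑ x : X, |post W y1 x - post W y2 x| :=
    Finset.sum_nonneg fun x _ => abs_nonneg _
  constructor
  · rw [hEq']
    positivity
  · rw [hEq']
    have hs1M : s1 ≤ qc * (2 / Mr) := by
      have : PY W y1 = s1 / qc := rfl
      rw [this] at h1
      calc s1 = (s1 / qc) * qc := by field_simp
        _ ≤ (2 / Mr) * qc := by
            apply mul_le_mul_of_nonneg_right _ hqc.le
            exact h1
        _ = qc * (2 / Mr) := by ring
    have hs2M : s2 ≤ qc * (2 / Mr) := by
      have : PY W y2 = s2 / qc := rfl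
      rw [this] at h2
      calc s2 = (s2 / qc) * qc := by field_simp
        _ ≤ (2 / Mr) * qc := by
            apply mul_le_mul_of_nonneg_right _ hqc.le
            exact h2
        _ = qc * (2 / Mr) := by ring
    set D : ℝ := ∑ x : X, |post W y1 x - post W y2 x| with hD
    calc T / (qc * Real.log 2) ≤ ((s1 + s2) * D) / (qc * Real.log 2) := by
          gcongr
        _ ≤ ((qc * (4 / Mr)) * D) / (qc * Real.log 2) := by
          have hs : s1 + s2 ≤ qc * (4 / Mr) := by
            have e : qc * (2 / Mr) + qc * (2 / Mr) = qc * (4 / Mr) := by ring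
            linarith
          gcongr
        _ = (4 * D) / (Mr * Real.log 2) := by
          field_simp
        _ ≤ (8 / Mr) * D := by
          have e : (8 / Mr) * D * (Mr * Real.log 2) = 8 * D * Real.log 2 := by
            field_simp
          rw [div_le_iff₀ (by positivity), e]
          nlinarith [mul_le_mul_of_nonneg_left hlog2 (by positivity : (0:ℝ) ≤ 8 * D)]

lemma exists_pair (n : ℕ) (hn : 1 ≤ n) {X Y : Type*} [Fintype X] [Fintype Y]
    (hX : Fintype.card X = n + 1) (hMY : 2 ≤ Fintype.card Y)
    (W : X → Y → ℝ) (hW : ∀ x y, 0 ≤ W x y) (hrow : ∀ x, ∑ y : Y, W x y = 1) :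
    ∃ y1 y2 : Y, y1 ≠ y2 ∧ PY W y1 ≤ 2 / (Fintype.card Y : ℝ) ∧
      PY W y2 ≤ 2 / (Fintype.card Y : ℝ) ∧
      (∑ x : X, |post W y1 x - post W y2 x|) ≤
        (20 * (n : ℝ) + 2 * ((5 * 2 ^ n : ℕ) : ℝ)) *
          (1 / (Fintype.card Y : ℝ)) ^ ((1 : ℝ) / (n : ℝ)) := by
  classical
  have hnr : (1 : ℝ) ≤ (n : ℝ) := by exact_mod_cast hn
  have hnne : (n : ℝ) ≠ 0 := by positivity
  have hexp1 : (1 : ℝ) / (n : ℝ) ≤ 1 := by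
    rw [div_le_one (by positivity)]; exact hnr
  set Mr : ℝ := (Fintype.card Y : ℝ) with hMrdef
  have hMr2 : (2 : ℝ) ≤ Mr := by rw [hMrdef]; exact_mod_cast hMY
  have hMrpos : 0 < Mr := by linarith
  set C0 : ℝ := 20 * (n : ℝ) + 2 * ((5 * 2 ^ n : ℕ) : ℝ) with hC0
  set Yexp : ℝ := (1 / Mr) ^ ((1 : ℝ) / (n : ℝ)) with hYexp
  have hYnn : 0 ≤ Yexp := Real.rpow_nonneg (by positivity) _
  have hXpos : 0 < Fintype.card X := by rw [hX]; omega
  have hXne : (Fintype.card X : ℝ) ≠ 0 := by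
    have : (0:ℝ) < (Fintype.card X : ℝ) := by exact_mod_cast hXpos
    linarith
  -- the light set
  have hPYnn : ∀ y, 0 ≤ PY W y := fun y =>
    div_nonneg (Finset.sum_nonneg fun x _ => hW x y) (by positivity)
  have hPYsum : ∑ y : Y, PY W y = 1 := by
    unfold PY
    rw [← Finset.sum_div, Finset.sum_comm]
    have h1 : ∑ x : X, ∑ y : Y, W x y = (Fintype.card X : ℝ) := by
      simp [hrow, Finset.card_univ]
    rw [h1, div_self hXne]
  obtain ⟨hS1, hS2⟩ := light_card (PY W) hPYnn hPYsum hMY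
  set S := Finset.univ.filter (fun y => PY W y ≤ 2 / Mr) with hSdef
  -- a generic bound |p - r| ≤ p + r for nonneg p r
  have habs : ∀ p r : ℝ, 0 ≤ p → 0 ≤ r → |p - r| ≤ p + r := by
    intro p r hp hr
    rw [abs_sub_le_iff]; constructor <;> linarith
  by_cases hbig : (5 * 2 ^ n : ℕ) ≤ Fintype.card Y
  · -- LARGE M : pigeonhole on buckets
    set x0 : ℝ := (Mr / 5) ^ ((1 : ℝ) / (n : ℝ)) with hx0def
    have hM5 : ((5 * 2 ^ n : ℕ) : ℝ) ≤ Mr := by rw [hMrdef]; exact_mod_cast hbig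
    have h2n : (2 : ℝ) ^ (n : ℕ) ≤ Mr / 5 := by push_cast at hM5; linarith
    have hd5pos : (0:ℝ) < Mr / 5 := by positivity
    have hx0_2 : (2 : ℝ) ≤ x0 := by
      have h := Real.rpow_le_rpow (by positivity) h2n (by positivity : (0:ℝ) ≤ 1 / (n:ℝ))
      rw [← Real.rpow_natCast 2 n, ← Real.rpow_mul (by norm_num : (0:ℝ) ≤ 2)] at h
      rw [mul_one_div_cancel hnne, Real.rpow_one] at h
      exact h
    have hx0pos : 0 < x0 := by linarith
    set K : ℕ := ⌊x0⌋₊ with hKdef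
    have hKpos : 0 < K := Nat.floor_pos.mpr (by linarith)
    have hKrpos : (0:ℝ) < K := by exact_mod_cast hKpos
    have hKx : (K : ℝ) ≤ x0 := Nat.floor_le hx0pos.le
    have hKlow : x0 / 2 ≤ (K : ℝ) := by
      have := Nat.sub_one_lt_floor x0
      have h2 : x0 / 2 ≤ x0 - 1 := by linarith
      linarith [this.le]
    have hKup : (K : ℝ) ^ (n : ℕ) ≤ Mr / 5 := by
      have h := pow_le_pow_left₀ hKrpos.le hKx n
      have e : x0 ^ (n : ℕ) = Mr / 5 := by
        rw [hx0def, ← Real.rpow_natCast ((Mr / 5) ^ ((1:ℝ)/(n:ℝ))) n,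
          ← Real.rpow_mul hd5pos.le, one_div_mul_cancel hnne, Real.rpow_one]
      rw [e] at h
      exact h
    -- bucket map
    set e : X ≃ Fin (n + 1) := Fintype.equivFinOfCardEq hX with hedef
    set g : Y → Bool × (Fin n → Fin K) := fun y =>
      (if (∑ x0 : X, W x0 y) = 0 then true else false,
       fun i => ⟨min ⌊(post W y (e.symm i.castSucc)) * K⌋₊ (K - 1), by omega⟩) with hgdef
    have hcardT : Fintype.card (Bool × (Fin n → Fin K)) = 2 * K ^ n := by
      simp [Fintype.card_fun]
    have hcardlt : (Finset.univ : Finset (Bool × (Fin n → Fin K))).card < S.card := by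
      have hreal : ((2 * K ^ n : ℕ) : ℝ) < (S.card : ℝ) := by
        push_cast
        have h1 : 2 * (K:ℝ) ^ (n:ℕ) ≤ 2 * (Mr / 5) := by linarith
        have h2 : 2 * (Mr / 5) < Mr / 2 := by linarith
        calc 2 * (K:ℝ) ^ (n:ℕ) < Mr / 2 := by linarith
          _ ≤ (S.card : ℝ) := hS1
      have : (2 * K ^ n : ℕ) < S.card := by exact_mod_cast hreal
      rwa [Finset.card_univ, hcardT]
    obtain ⟨y1, hy1, y2, hy2, hne, hg⟩ :=
      Finset.exists_ne_map_eq_of_card_lt_of_maps_to hcardlt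
        (fun y _ => Finset.mem_univ (g y))
    have hy1S : PY W y1 ≤ 2 / Mr := (Finset.mem_filter.mp hy1).2
    have hy2S : PY W y2 ≤ 2 / Mr := (Finset.mem_filter.mp hy2).2
    refine ⟨y1, y2, hne, hy1S, hy2S, ?_⟩
    have hflag : (if (∑ x0 : X, W x0 y1) = 0 then true else false)
        = (if (∑ x0 : X, W x0 y2) = 0 then true else false) := congrArg Prod.fst hg
    have hbuck : ∀ i : Fin n,
        min ⌊(post W y1 (e.symm i.castSucc)) * K⌋₊ (K - 1)
          = min ⌊(post W y2 (e.symm i.castSucc)) * K⌋₊ (K - 1) := by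
      intro i
      have := congrFun (congrArg Prod.snd hg) i
      exact congrArg Fin.val this
    by_cases hdeg : (∑ x0 : X, W x0 y1) = 0
    · have hdeg2 : (∑ x0 : X, W x0 y2) = 0 := by
        by_contra hc
        rw [if_pos hdeg, if_neg hc] at hflag
        exact Bool.noConfusion hflag
      have hzero : (∑ x : X, |post W y1 x - post W y2 x|) = 0 := by
        apply Finset.sum_eq_zero
        intro x _
        unfold post
        rw [hdeg, hdeg2, div_zero, div_zero, sub_zero, abs_zero]
      rw [hzero]
      positivity
    · have hdeg2 : (∑ x0 : X, W x0 y2) ≠ 0 := by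
        intro hc
        rw [if_neg hdeg, if_pos hc] at hflag
        exact Bool.noConfusion hflag
      -- per-coordinate closeness
      have hclose : ∀ i : Fin n,
          |post W y1 (e.symm i.castSucc) - post W y2 (e.symm i.castSucc)| ≤ 1 / K := by
        intro i
        exact bucket_close K hKpos (post_nonneg W hW _ _) (post_le_one W hW _ _)
          (post_nonneg W hW _ _) (post_le_one W hW _ _) (hbuck i)
      set f : X → ℝ := fun x => |post W y1 x - post W y2 x| with hfdef
      have hsplit : (∑ x : X, f x)
          = (∑ i : Fin n, f (e.symm i.castSucc)) + f (e.symm (Fin.last n)) := by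
        rw [← Equiv.sum_comp e.symm f, Fin.sum_univ_castSucc]
      have hhead : (∑ i : Fin n, f (e.symm i.castSucc)) ≤ (n : ℝ) * (1 / K) := by
        calc (∑ i : Fin n, f (e.symm i.castSucc)) ≤ ∑ _i : Fin n, (1 / (K:ℝ)) :=
              Finset.sum_le_sum fun i _ => hclose i
          _ = (n : ℝ) * (1 / K) := by
              rw [Finset.sum_const, Finset.card_univ, Fintype.card_fin, nsmul_eq_mul]
      have hlastbound : f (e.symm (Fin.last n)) ≤ (n : ℝ) * (1 / K) := by
        have hpost1 : ∑ i : Fin (n+1), post W y1 (e.symm i) = 1 := by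
          rw [Equiv.sum_comp e.symm (post W y1)]
          exact post_sum_eq_one W y1 hdeg
        have hpost2 : ∑ i : Fin (n+1), post W y2 (e.symm i) = 1 := by
          rw [Equiv.sum_comp e.symm (post W y2)]
          exact post_sum_eq_one W y2 hdeg2
        rw [Fin.sum_univ_castSucc] at hpost1 hpost2
        have hlast : post W y1 (e.symm (Fin.last n)) - post W y2 (e.symm (Fin.last n))
            = ∑ i : Fin n, (post W y2 (e.symm i.castSucc) - post W y1 (e.symm i.castSucc)) := by
          rw [Finset.sum_sub_distrib]
          linarith
        have : f (e.symm (Fin.last n)) ≤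
            ∑ i : Fin n, |post W y2 (e.symm i.castSucc) - post W y1 (e.symm i.castSucc)| := by
          rw [hfdef]
          simp only []
          rw [hlast]
          exact Finset.abs_sum_le_sum_abs _ _
        calc f (e.symm (Fin.last n)) ≤
              ∑ i : Fin n, |post W y2 (e.symm i.castSucc) - post W y1 (e.symm i.castSucc)| := this
          _ ≤ ∑ _i : Fin n, (1 / (K:ℝ)) := by
              apply Finset.sum_le_sum
              intro i _
              rw [abs_sub_comm]
              exact hclose i
          _ = (n : ℝ) * (1 / K) := by
              rw [Finset.sum_const, Finset.card_univ, Fintype.card_fin, nsmul_eq_mul]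
      have hDelta : (∑ x : X, f x) ≤ 2 * (n : ℝ) / K := by
        rw [hsplit]
        have : (n:ℝ) * (1/K) + (n:ℝ) * (1/K) = 2 * (n:ℝ) / K := by ring
        linarith
      -- convert 1/K to Yexp
      have hprod : x0 * ((5:ℝ) ^ ((1:ℝ)/(n:ℝ)) * Yexp) = 1 := by
        rw [hx0def, hYexp]
        rw [← Real.mul_rpow (by norm_num : (0:ℝ) ≤ 5) (by positivity : (0:ℝ) ≤ 1/Mr)]
        rw [← Real.mul_rpow hd5pos.le (by positivity : (0:ℝ) ≤ 5 * (1/Mr))]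
        rw [show Mr / 5 * (5 * (1/Mr)) = 1 by field_simp]
        exact Real.one_rpow _
      have hinv : 1 / x0 = (5:ℝ) ^ ((1:ℝ)/(n:ℝ)) * Yexp :=
        (eq_one_div_of_mul_eq_one_left (by linarith [hprod] : ((5:ℝ) ^ ((1:ℝ)/(n:ℝ)) * Yexp) * x0 = 1)).symm ▸ rfl
      have h1K : 1 / (K:ℝ) ≤ 2 * (1 / x0) := by
        have h := (div_le_div_iff₀ hKrpos hx0pos).mpr (by linarith : 1 * x0 ≤ 2 * (K:ℝ))
        rw [show (2:ℝ)/x0 = 2 * (1/x0) by ring] at h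
        simpa using h
      have h5e : (5:ℝ) ^ ((1:ℝ)/(n:ℝ)) ≤ 5 := by
        calc (5:ℝ) ^ ((1:ℝ)/(n:ℝ)) ≤ (5:ℝ) ^ (1:ℝ) :=
              Real.rpow_le_rpow_of_exponent_le (by norm_num) hexp1
          _ = 5 := Real.rpow_one 5
      calc (∑ x : X, f x) ≤ 2 * (n:ℝ) / K := hDelta
        _ = 2 * (n:ℝ) * (1 / K) := by ring
        _ ≤ 2 * (n:ℝ) * (2 * (1 / x0)) := by
            apply mul_le_mul_of_nonneg_left h1K (by positivity)
        _ = 4 * (n:ℝ) * (1 / x0) := by ring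
        _ = 4 * (n:ℝ) * ((5:ℝ) ^ ((1:ℝ)/(n:ℝ)) * Yexp) := by rw [hinv]
        _ ≤ 4 * (n:ℝ) * (5 * Yexp) := by
            apply mul_le_mul_of_nonneg_left _ (by positivity)
            exact mul_le_mul_of_nonneg_right h5e hYnn
        _ = 20 * (n:ℝ) * Yexp := by ring
        _ ≤ C0 * Yexp := by
            apply mul_le_mul_of_nonneg_right _ hYnn
            rw [hC0]
            have : (0:ℝ) ≤ ((5 * 2 ^ n : ℕ) : ℝ) := by positivity
            linarith
  · -- SMALL M : any two light symbols work
    obtain ⟨y1, hy1, y2, hy2, hne⟩ := Finset.one_lt_card.mp (by omega : 1 < S.card)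
    have hy1S : PY W y1 ≤ 2 / Mr := (Finset.mem_filter.mp hy1).2
    have hy2S : PY W y2 ≤ 2 / Mr := (Finset.mem_filter.mp hy2).2
    refine ⟨y1, y2, hne, hy1S, hy2S, ?_⟩
    have hDelta : (∑ x : X, |post W y1 x - post W y2 x|) ≤ 2 := by
      calc (∑ x : X, |post W y1 x - post W y2 x|)
          ≤ ∑ x : X, (post W y1 x + post W y2 x) :=
            Finset.sum_le_sum fun x _ => habs _ _ (post_nonneg W hW _ _) (post_nonneg W hW _ _)
        _ = (∑ x : X, post W y1 x) + (∑ x : X, post W y2 x) := Finset.sum_add_distrib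
        _ ≤ 2 := by linarith [post_sum_le_one W hW y1, post_sum_le_one W hW y2]
    have h2C : (2:ℝ) ≤ C0 * Yexp := by
      have hMle : Mr ≤ ((5 * 2 ^ n : ℕ) : ℝ) := by
        rw [hMrdef]
        exact_mod_cast (le_of_lt (Nat.lt_of_not_le hbig))
      have hpow : Mr ^ ((1:ℝ)/(n:ℝ)) ≤ Mr := by
        calc Mr ^ ((1:ℝ)/(n:ℝ)) ≤ Mr ^ (1:ℝ) :=
              Real.rpow_le_rpow_of_exponent_le (by linarith) hexp1
          _ = Mr := Real.rpow_one Mr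
      have hprod : Mr ^ ((1:ℝ)/(n:ℝ)) * Yexp = 1 := by
        rw [hYexp, ← Real.mul_rpow hMrpos.le (by positivity)]
        rw [show Mr * (1/Mr) = 1 by field_simp]
        exact Real.one_rpow _
      have hC0ge : 2 * Mr ^ ((1:ℝ)/(n:ℝ)) ≤ C0 := by
        rw [hC0]
        have hn0 : (0:ℝ) ≤ 20 * (n:ℝ) := by positivity
        linarith
      calc (2:ℝ) = (2 * Mr ^ ((1:ℝ)/(n:ℝ))) * Yexp := by
            rw [mul_assoc, hprod]; ring
        _ ≤ C0 * Yexp := mul_le_mul_of_nonneg_right hC0ge hYnn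
    linarith
/-- For any DMC with input size `q` and output size `M` there are two output symbols of
mass `O(1/M)` whose posteriors are `O((1/M)^{1/(q−1)})`-close in `ℓ1`; merging them
incurs a capacity loss of `O((1/M)^{q/(q−1)})`, where the implied constants depend
only on `q`. -/
theorem exists_good_merge_pair (q : ℕ) (hq : 2 ≤ q) :
    ∃ C C' : ℝ, 0 < C ∧ 0 < C' ∧
      ∀ (X Y : Type) [Fintype X] [Fintype Y] [DecidableEq Y],
        Fintype.card X = q → 2 ≤ Fintype.card Y →
        ∀ W : X → Y → ℝ, (∀ x y, 0 ≤ W x y) → (∀ x, ∑ y : Y, W x y = 1) →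
        ∃ y1 y2 : Y, y1 ≠ y2 ∧
          PY W y1 ≤ 2 / (Fintype.card Y : ℝ) ∧
          PY W y2 ≤ 2 / (Fintype.card Y : ℝ) ∧
          (∑ x : X, |post W y1 x - post W y2 x|) ≤
            C * (1 / (Fintype.card Y : ℝ)) ^ ((1 : ℝ) / ((q : ℝ) - 1)) ∧
          0 ≤ symCap W - symCap (mergeCh W y1 y2) ∧
          symCap W - symCap (mergeCh W y1 y2) ≤
            C' * (1 / (Fintype.card Y : ℝ)) ^ ((q : ℝ) / ((q : ℝ) - 1)) := by
  classical
  obtain ⟨n, rfl⟩ : ∃ n, q = n + 1 := ⟨q - 1, by omega⟩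
  have hn : 1 ≤ n := by omega
  set C : ℝ := 20 * (n : ℝ) + 2 * ((5 * 2 ^ n : ℕ) : ℝ) with hC
  have hM0pos : (0:ℝ) < ((5 * 2 ^ n : ℕ) : ℝ) := by
    exact_mod_cast (by positivity : 0 < 5 * 2 ^ n)
  have hCpos : 0 < C := by
    have : (0:ℝ) ≤ 20 * (n : ℝ) := by positivity
    rw [hC]; linarith
  refine ⟨C, 8 * C, hCpos, by linarith, ?_⟩
  intro X Y _ _ _ hX hMY W hWnn hWrow
  have hMrpos : (0:ℝ) < (Fintype.card Y : ℝ) := by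
    exact_mod_cast (by omega : 0 < Fintype.card Y)
  have hexp : ((n + 1 : ℕ) : ℝ) - 1 = (n : ℝ) := by push_cast; ring
  obtain ⟨y1, y2, hne, h1, h2, hD⟩ := exists_pair n hn hX hMY W hWnn hWrow
  have hXpos : 0 < Fintype.card X := by rw [hX]; omega
  obtain ⟨hc1, hc2⟩ := cap_bounds W hWnn y1 y2 hne hXpos (by omega) h1 h2
  refine ⟨y1, y2, hne, h1, h2, ?_, hc1, ?_⟩
  · rw [hexp]
    exact hD
  · rw [hexp]
    have hnne : (n : ℝ) ≠ 0 := by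
      have : (1:ℝ) ≤ (n:ℝ) := by exact_mod_cast hn
      linarith
    have hr : (1 / (Fintype.card Y : ℝ)) ^ ((1:ℝ)/(n:ℝ)) * (1 / (Fintype.card Y : ℝ))
        = (1 / (Fintype.card Y : ℝ)) ^ (((n + 1 : ℕ) : ℝ) / (n : ℝ)) := by
      rw [show (((n + 1 : ℕ) : ℝ)) / (n : ℝ) = (1:ℝ)/(n:ℝ) + 1 by push_cast; field_simp; ring]
      rw [Real.rpow_add (by positivity), Real.rpow_one]
    calc symCap W - symCap (mergeCh W y1 y2)
        ≤ (8 / (Fintype.card Y : ℝ)) * ∑ x : X, |post W y1 x - post W y2 x| := hc2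
      _ ≤ (8 / (Fintype.card Y : ℝ)) * (C * (1 / (Fintype.card Y : ℝ)) ^ ((1:ℝ)/(n:ℝ))) := by
          apply mul_le_mul_of_nonneg_left hD (by positivity)
      _ = 8 * C * ((1 / (Fintype.card Y : ℝ)) ^ ((1:ℝ)/(n:ℝ)) * (1 / (Fintype.card Y : ℝ))) := by
          ring
      _ = 8 * C * (1 / (Fintype.card Y : ℝ)) ^ (((n + 1 : ℕ) : ℝ) / (n : ℝ)) := by rw [hr]

end
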